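/- Let C ∈ ℝ^{d×(m+1)} be a row-stochastic matrix over alphabet O = {0,...,m}, and for x ∈ S define c(x) ∈ ℝ^m by c(x)_i = C(x,i) - C(x,0), and the matrix R(x) := diag(c(x)) + C(x,0)(I + 𝟙𝟙ᵀ) - c(x)c(x)ᵀ, where 𝟙 ∈ ℝ^m is the all-ones vector. Then R(x) equals the covariance matrix of the random vector e(Z) where Z has distribution C(x,·) on O and e is the balanced encoding; in particular R(x) is symmetric positive semidefinite for every x. -/

import Mathlib

open Finset Matrix

def stdBasis (m : ℕ) (i : Fin m) : Fin m → ℝ := fun j => if j = i then 1 else 0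

/-- The balanced encoding `e : {0,1,…,m} → ℝ^m`. -/
def balancedEncoding (m : ℕ) (z : Fin (m + 1)) : Fin m → ℝ :=
  if h : (z : ℕ) = 0 then -∑ i : Fin m, stdBasis m i
  else stdBasis m ⟨(z : ℕ) - 1, by omega⟩

lemma bE_zero (m : ℕ) (i : Fin m) : balancedEncoding m 0 i = -1 := by
  simp [balancedEncoding, _root_.stdBasis, Finset.sum_ite_eq]

lemma bE_succ (m : ℕ) (k i : Fin m) :
    balancedEncoding m k.succ i = if i = k then 1 else 0 := by
  simp [balancedEncoding, _root_.stdBasis]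

section AuxPSD

variable {n ι : Type*} [Fintype n] [Fintype ι]

lemma my_sum_mulVec (A : ι → Matrix n n ℝ) (v : n → ℝ) :
    (∑ z, A z) *ᵥ v = ∑ z, A z *ᵥ v := by
  funext i
  simp [mulVec, dotProduct, Matrix.sum_apply, Finset.sum_apply, Finset.sum_mul]
  rw [Finset.sum_comm]

lemma my_dotProduct_sum (v : n → ℝ) (f : ι → n → ℝ) :
    v ⬝ᵥ (∑ z, f z) = ∑ z, v ⬝ᵥ f z := by
  simp only [dotProduct, Finset.sum_apply, Finset.mul_sum]
  exact Finset.sum_comm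

lemma quad_vecMulVec (a v : n → ℝ) :
    v ⬝ᵥ (vecMulVec a a *ᵥ v) = (a ⬝ᵥ v) ^ 2 := by
  simp only [dotProduct, mulVec, vecMulVec_apply, sq, Finset.sum_mul_sum]
  refine Finset.sum_congr rfl fun i _ => ?_
  simp only [dotProduct, Finset.mul_sum]
  exact Finset.sum_congr rfl fun j _ => by ring

omit [Fintype n] in
lemma cov_centered (p : ι → ℝ) (hp : ∑ z, p z = 1) (w : ι → n → ℝ) :
    (∑ z, p z • vecMulVec (w z) (w z)) -
      vecMulVec (∑ z, p z • w z) (∑ z, p z • w z)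
      = ∑ z, p z • vecMulVec (w z - ∑ z', p z' • w z') (w z - ∑ z', p z' • w z') := by
  ext i j
  simp only [Matrix.sub_apply, Matrix.sum_apply, Finset.sum_apply, Pi.smul_apply,
    Matrix.smul_apply, vecMulVec_apply, smul_eq_mul, Pi.sub_apply]
  set A := ∑ z', p z' * w z' i with hA
  set B := ∑ z', p z' * w z' j with hB
  have expand : ∀ z, p z * ((w z i - A) * (w z j - B))
      = p z * (w z i * w z j) - (p z * w z i) * B - (p z * w z j) * A + p z * (A * B) :=
    fun z => by ring
  simp only [expand, Finset.sum_add_distrib, Finset.sum_sub_distrib, ← Finset.sum_mul,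
    ← Finset.mul_sum]
  rw [← hA, ← hB, hp]
  ring

lemma psd_weighted_sum (p : ι → ℝ) (hp : ∀ z, 0 ≤ p z) (w : ι → n → ℝ) :
    (∑ z, p z • vecMulVec (w z) (w z)).PosSemidef := by
  rw [posSemidef_iff_dotProduct_mulVec]
  constructor
  · ext i j
    simp only [conjTranspose_apply, Matrix.sum_apply, Matrix.smul_apply, vecMulVec_apply,
      smul_eq_mul, star_trivial, Matrix.transpose_apply]
    exact Finset.sum_congr rfl fun z _ => by ring
  · intro v
    rw [my_sum_mulVec, star_trivial, my_dotProduct_sum]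
    refine Finset.sum_nonneg fun z _ => ?_
    rw [smul_mulVec, dotProduct_smul, smul_eq_mul, quad_vecMulVec]
    exact mul_nonneg (hp z) (sq_nonneg _)

end AuxPSD

section

variable (d m : ℕ) (Cmat : Fin d → Fin (m + 1) → ℝ)

/-- `c(x) ∈ ℝ^m`, `c(x)_i = C(x,i) - C(x,0)`. -/
def cvec (x : Fin d) : Fin m → ℝ := fun i => Cmat x i.succ - Cmat x 0

/-- `R(x) = diag(c(x)) + C(x,0)(I + 𝟙𝟙ᵀ) - c(x)c(x)ᵀ`. -/
noncomputable def Rmat (x : Fin d) : Matrix (Fin m) (Fin m) ℝ :=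
  Matrix.diagonal (cvec d m Cmat x) +
    Cmat x 0 • ((1 : Matrix (Fin m) (Fin m) ℝ) +
      vecMulVec (fun _ => (1 : ℝ)) (fun _ => (1 : ℝ))) -
    vecMulVec (cvec d m Cmat x) (cvec d m Cmat x)

lemma mean_eq (x : Fin d) :
    (∑ z, Cmat x z • balancedEncoding m z) = cvec d m Cmat x := by
  funext i
  simp only [Finset.sum_apply, Pi.smul_apply, smul_eq_mul]
  rw [Fin.sum_univ_succ]
  simp only [bE_zero, bE_succ, mul_ite, mul_one, mul_zero, Finset.sum_ite_eq,
    Finset.mem_univ, if_true, cvec]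
  ring

lemma second_moment (x : Fin d) :
    Matrix.diagonal (cvec d m Cmat x) +
      Cmat x 0 • ((1 : Matrix (Fin m) (Fin m) ℝ) +
        vecMulVec (fun _ => (1 : ℝ)) (fun _ => (1 : ℝ)))
      = ∑ z, Cmat x z • vecMulVec (balancedEncoding m z) (balancedEncoding m z) := by
  ext i j
  simp only [Matrix.add_apply, Matrix.smul_apply, Matrix.sum_apply, Matrix.diagonal_apply,
    Matrix.one_apply, vecMulVec_apply, smul_eq_mul]
  rw [Fin.sum_univ_succ]
  simp only [bE_zero, bE_succ]
  by_cases h : i = j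
  · subst h
    simp only [if_pos rfl, mul_ite, ite_mul, mul_one, mul_zero, one_mul, zero_mul]
    rw [Finset.sum_ite_eq, if_pos (Finset.mem_univ i)]
    simp [cvec]
    ring
  · rw [if_neg h, if_neg h, Finset.sum_eq_zero (fun k _ => by
      by_cases hik : i = k <;> by_cases hjk : j = k <;> simp_all)]
    ring

/-- `R(x)` is the covariance matrix of `e(Z)` for `Z ~ C(x,·)`;
in particular it is symmetric positive semidefinite. -/
theorem Rmat_eq_covariance
    (hC_nonneg : ∀ x z, 0 ≤ Cmat x z) (hC_row : ∀ x, ∑ z, Cmat x z = 1)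
    (x : Fin d) :
    Rmat d m Cmat x =
      (∑ z, Cmat x z • vecMulVec (balancedEncoding m z) (balancedEncoding m z)) -
        vecMulVec (∑ z, Cmat x z • balancedEncoding m z)
          (∑ z, Cmat x z • balancedEncoding m z) ∧
      (Rmat d m Cmat x).PosSemidef := by
  have h1 : Rmat d m Cmat x =
      (∑ z, Cmat x z • vecMulVec (balancedEncoding m z) (balancedEncoding m z)) -
        vecMulVec (∑ z, Cmat x z • balancedEncoding m z)
          (∑ z, Cmat x z • balancedEncoding m z) := by
    rw [mean_eq, Rmat, second_moment]
  refine ⟨h1, ?_⟩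
  rw [h1, cov_centered (Cmat x) (hC_row x) (balancedEncoding m)]
  exact psd_weighted_sum _ (hC_nonneg x) _

end
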